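/- For every real number α > 0, the alternating 3-form φ_α = (α/2)(e¹²⁷ + e³⁴⁷ + e⁵⁶⁷) + e¹³⁵ − e¹⁴⁶ − e²³⁶ − e²⁴⁵ on the Lie algebra 𝔨_α (structure equations de¹ = −α e¹⁷, de² = −2 e³⁵, de³ = −e²⁵ − e⁵⁷, de⁴ = (α/2) e⁴⁷ − e⁶⁷, de⁵ = e²³ + e³⁷, de⁶ = e⁴⁷ + (α/2) e⁶⁷, de⁷ = 0) is closed with respect to the Chevalley–Eilenberg differential: dφ_α = 0. -/
import Mathlib


/-!
Common framework: unbundled exterior forms on ℝ⁷, wedge product, interior product,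
Chevalley–Eilenberg differential of a Lie bracket, induced inner products on forms,
derived series, and the Lie algebras / G₂-structures from the paper
"Laplacian flow solitons on non-solvable Lie groups" (Fino–Raffero).
-/

open scoped BigOperators

namespace G2Solitons

/-- The underlying vector space ℝ⁷. -/
abbrev V7 : Type := Fin 7 → ℝ

/-- Unbundled `k`-forms: real-valued functions of `k` vectors of ℝ⁷. -/
abbrev Form (k : ℕ) : Type := (Fin k → V7) → ℝ

/-- Standard basis of ℝ⁷. -/
def stdB (i : Fin 7) : V7 := fun j => if j = i then 1 else 0

/-- The basic `k`-form `e^{i₁} ∧ ⋯ ∧ e^{i_k}` (determinant convention, 0-indexed). -/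
def eB {k : ℕ} (idx : Fin k → Fin 7) : Form k :=
  fun v => Matrix.det (Matrix.of fun a b : Fin k => v a (idx b))

/-- Wedge product of a `p`-form and a `q`-form (convention
`(α∧β)(v) = (p!q!)⁻¹ ∑_σ sgn σ · α(v∘σ|_{first p}) β(v∘σ|_{last q})`). -/
noncomputable def wedge {p q : ℕ} (α : Form p) (β : Form q) : Form (p + q) := fun v =>
  ((p.factorial * q.factorial : ℕ) : ℝ)⁻¹ *
    ∑ σ : Equiv.Perm (Fin (p + q)),
      ((Equiv.Perm.sign σ : ℤ) : ℝ) *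
        (α (fun i => v (σ (Fin.castAdd q i))) * β (fun j => v (σ (Fin.natAdd p j))))

/-- Interior product of a vector with a `(k+1)`-form. -/
def iprod {k : ℕ} (u : V7) (α : Form (k + 1)) : Form k := fun v => α (Fin.cons u v)

/-- Chevalley–Eilenberg differential of a `(k+1)`-form with respect to a bracket:
`(dα)(x₀,…,x_{k+1}) = ∑_{i<j} (-1)^{i+j} α([xᵢ,xⱼ], x₀,…,x̂ᵢ,…,x̂ⱼ,…,x_{k+1})`. -/
def dCE {k : ℕ} (br : V7 → V7 → V7) (α : Form (k + 1)) : Form (k + 2) := fun v =>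
  ∑ i : Fin (k + 2), ∑ j : Fin (k + 2),
    if (i : ℕ) < (j : ℕ) then
      (-1 : ℝ) ^ ((i : ℕ) + (j : ℕ)) *
        α (Fin.cons (br (v i) (v j)) fun l : Fin k =>
            if (l : ℕ) < (i : ℕ) then v ⟨(l : ℕ), by omega⟩
            else if (l : ℕ) + 1 < (j : ℕ) then v ⟨(l : ℕ) + 1, by omega⟩
            else v ⟨(l : ℕ) + 2, by omega⟩)
    else 0

/-- Inner product on `k`-forms induced by the diagonal metric `g = ∑ᵢ c i (e^i)²`,
determined by declaring `{(c i₁ ⋯ c i_k)^{-1/2} e^{i₁⋯i_k} : i₁ < ⋯ < i_k}` orthonormal. -/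
noncomputable def formInner (c : Fin 7 → ℝ) {k : ℕ} (α β : Form k) : ℝ :=
  ((k.factorial : ℕ) : ℝ)⁻¹ *
    ∑ f : Fin k → Fin 7,
      (∏ i, c (f i))⁻¹ * (α (fun i => stdB (f i)) * β (fun i => stdB (f i)))

/-- Natural action of an endomorphism `D` on a `k`-form:
`(D.α)(v₁,…,v_k) = ∑ᵢ α(v₁,…,D vᵢ,…,v_k)`. -/
def actD {k : ℕ} (D : V7 → V7) (α : Form k) : Form k := fun v =>
  ∑ i : Fin k, α (Function.update v i (D (v i)))

/-- The Jacobi identity for a bilinear bracket. -/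
def Jacobi (br : V7 → V7 → V7) : Prop :=
  ∀ x y z : V7, br (br x y) z + br (br y z) x + br (br z x) y = 0

/-- Unimodularity: `tr (ad x) = 0` for all `x`. -/
def Unimodular (br : V7 → V7 → V7) : Prop :=
  ∀ x : V7, ∑ i : Fin 7, br x (stdB i) i = 0

/-- Derivation property for a map `D`. -/
def IsDeriv (br : V7 → V7 → V7) (D : V7 → V7) : Prop :=
  ∀ x y : V7, D (br x y) = br (D x) y + br x (D y)

/-- Derived series of a bracket. -/
def derSeries (br : V7 → V7 → V7) : ℕ → Submodule ℝ V7
  | 0 => ⊤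
  | n + 1 => Submodule.span ℝ
      {z | ∃ x ∈ derSeries br n, ∃ y ∈ derSeries br n, z = br x y}

/-- Solvability: the derived series terminates at zero. -/
def Solvable (br : V7 → V7 → V7) : Prop := ∃ n, derSeries br n = ⊥

/-- Real cube root (the real root, also for negative arguments). -/
noncomputable def cbrt (x : ℝ) : ℝ :=
  if x < 0 then -((-x) ^ ((1 : ℝ) / 3)) else x ^ ((1 : ℝ) / 3)

/-- The standard volume form `e^{1234567}`. -/
def vol7 : Form 7 := eB ![0, 1, 2, 3, 4, 5, 6]

end G2Solitons

namespace G2Solitons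

noncomputable section

/-- The bracket of the Lie algebra `𝔨_α` with structure equations
`(-α e¹⁷, -2 e³⁵, -e²⁵ - e⁵⁷, (α/2) e⁴⁷ - e⁶⁷, e²³ + e³⁷, e⁴⁷ + (α/2) e⁶⁷, 0)`,
via the convention `dβ(x,y) = -β([x,y])`. -/
def brK (α : ℝ) : V7 → V7 → V7 := fun x y =>
  ![α * (x 0 * y 6 - x 6 * y 0),
    2 * (x 2 * y 4 - x 4 * y 2),
    (x 1 * y 4 - x 4 * y 1) + (x 4 * y 6 - x 6 * y 4),
    -(α / 2) * (x 3 * y 6 - x 6 * y 3) + (x 5 * y 6 - x 6 * y 5),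
    -(x 1 * y 2 - x 2 * y 1) - (x 2 * y 6 - x 6 * y 2),
    -(x 3 * y 6 - x 6 * y 3) - α / 2 * (x 5 * y 6 - x 6 * y 5),
    0]

/-- `φ_α = (α/2)(e¹²⁷ + e³⁴⁷ + e⁵⁶⁷) + e¹³⁵ - e¹⁴⁶ - e²³⁶ - e²⁴⁵`. -/
def phiK (α : ℝ) : Form 3 := fun v =>
  α / 2 * (eB ![0, 1, 6] v + eB ![2, 3, 6] v + eB ![4, 5, 6] v)
    + eB ![0, 2, 4] v - eB ![0, 3, 5] v - eB ![1, 2, 5] v - eB ![1, 3, 4] v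

/-- Diagonal coefficients of the metric `g_{φ_α} = ∑_{i=1}^{6} (e^i)² + (α²/4)(e⁷)²`. -/
def cK (α : ℝ) : Fin 7 → ℝ := ![1, 1, 1, 1, 1, 1, α ^ 2 / 4]

/-- The metric `g_{φ_α}` as a bilinear form. -/
def gK (α : ℝ) (u v : V7) : ℝ := ∑ i : Fin 7, cK α i * u i * v i

/-- The volume form `dV_{φ_α} = (α/2) e¹²³⁴⁵⁶⁷`. -/
def dVK (α : ℝ) : Form 7 := fun v => α / 2 * vol7 v

/-- `τ_α = 4 e¹² - 2 e³⁴ - 2 e⁵⁶`. -/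
def tauK : Form 2 := fun v =>
  4 * eB ![0, 1] v - 2 * eB ![2, 3] v - 2 * eB ![4, 5] v

/-- `D = diag(-2, 0, 0, 4, 0, 4, 0)`. -/
def DK : V7 → V7 := fun x i => (![-2, 0, 0, 4, 0, 4, 0] : Fin 7 → ℝ) i * x i

end

end G2Solitons

namespace G2Solitons

set_option maxHeartbeats 2000000 in
private lemma phiK_apply (α : ℝ) (v : Fin 3 → V7) :
    phiK α v =
      α / 2 * ((v 0 0 * (v 1 1 * v 2 6 - v 1 6 * v 2 1)
          - v 0 1 * (v 1 0 * v 2 6 - v 1 6 * v 2 0)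
          + v 0 6 * (v 1 0 * v 2 1 - v 1 1 * v 2 0))
        + (v 0 2 * (v 1 3 * v 2 6 - v 1 6 * v 2 3)
          - v 0 3 * (v 1 2 * v 2 6 - v 1 6 * v 2 2)
          + v 0 6 * (v 1 2 * v 2 3 - v 1 3 * v 2 2))
        + (v 0 4 * (v 1 5 * v 2 6 - v 1 6 * v 2 5)
          - v 0 5 * (v 1 4 * v 2 6 - v 1 6 * v 2 4)
          + v 0 6 * (v 1 4 * v 2 5 - v 1 5 * v 2 4)))
      + (v 0 0 * (v 1 2 * v 2 4 - v 1 4 * v 2 2)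
          - v 0 2 * (v 1 0 * v 2 4 - v 1 4 * v 2 0)
          + v 0 4 * (v 1 0 * v 2 2 - v 1 2 * v 2 0))
      - (v 0 0 * (v 1 3 * v 2 5 - v 1 5 * v 2 3)
          - v 0 3 * (v 1 0 * v 2 5 - v 1 5 * v 2 0)
          + v 0 5 * (v 1 0 * v 2 3 - v 1 3 * v 2 0))
      - (v 0 1 * (v 1 2 * v 2 5 - v 1 5 * v 2 2)
          - v 0 2 * (v 1 1 * v 2 5 - v 1 5 * v 2 1)
          + v 0 5 * (v 1 1 * v 2 2 - v 1 2 * v 2 1))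
      - (v 0 1 * (v 1 3 * v 2 4 - v 1 4 * v 2 3)
          - v 0 3 * (v 1 1 * v 2 4 - v 1 4 * v 2 1)
          + v 0 4 * (v 1 1 * v 2 3 - v 1 3 * v 2 1)) := by
  simp [phiK, eB, Matrix.det_fin_three]
  ring

private lemma brK0 (α : ℝ) (x y : V7) : brK α x y 0 = α * (x 0 * y 6 - x 6 * y 0) := rfl
private lemma brK1 (α : ℝ) (x y : V7) : brK α x y 1 = 2 * (x 2 * y 4 - x 4 * y 2) := rfl
private lemma brK2 (α : ℝ) (x y : V7) :
    brK α x y 2 = (x 1 * y 4 - x 4 * y 1) + (x 4 * y 6 - x 6 * y 4) := rfl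
private lemma brK3 (α : ℝ) (x y : V7) :
    brK α x y 3 = -(α / 2) * (x 3 * y 6 - x 6 * y 3) + (x 5 * y 6 - x 6 * y 5) := rfl
private lemma brK4 (α : ℝ) (x y : V7) :
    brK α x y 4 = -(x 1 * y 2 - x 2 * y 1) - (x 2 * y 6 - x 6 * y 2) := rfl
private lemma brK5 (α : ℝ) (x y : V7) :
    brK α x y 5 = -(x 3 * y 6 - x 6 * y 3) - α / 2 * (x 5 * y 6 - x 6 * y 5) := rfl
private lemma brK6 (α : ℝ) (x y : V7) : brK α x y 6 = 0 := rfl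

private lemma cons3_zero (u : V7) (f : Fin 2 → V7) : (Fin.cons u f : ∀ _ : Fin 3, V7) 0 = u := rfl
private lemma cons3_one (u : V7) (f : Fin 2 → V7) : (Fin.cons u f : ∀ _ : Fin 3, V7) 1 = f 0 := rfl
private lemma cons3_two (u : V7) (f : Fin 2 → V7) : (Fin.cons u f : ∀ _ : Fin 3, V7) 2 = f 1 := rfl

set_option maxRecDepth 40000 in
set_option maxHeartbeats 4000000 in
theorem dphiK_eq_zero (α : ℝ) (hα : 0 < α) :
    ∀ v, dCE (brK α) (phiK α) v = 0 := by
  intro v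
  show (∑ i : Fin 4, ∑ j : Fin 4, _) = 0
  rw [Fin.sum_univ_four, Fin.sum_univ_four, Fin.sum_univ_four, Fin.sum_univ_four,
    Fin.sum_univ_four]
  simp only [show ((0:Fin 4):ℕ) = 0 from rfl, show ((1:Fin 4):ℕ) = 1 from rfl,
    show ((2:Fin 4):ℕ) = 2 from rfl, show ((3:Fin 4):ℕ) = 3 from rfl]
  norm_num
  simp only [phiK_apply, cons3_zero, cons3_one, cons3_two,
    show ((0:Fin 2):ℕ) = 0 from rfl, show ((1:Fin 2):ℕ) = 1 from rfl]
  norm_num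
  simp only [brK0, brK1, brK2, brK3, brK4, brK5, brK6,
    show (⟨0 + 2, by omega⟩ : Fin (2+2)) = 2 from rfl,
    show (⟨1 + 2, by omega⟩ : Fin (2+2)) = 3 from rfl,
    show (⟨0 + 1, by omega⟩ : Fin (2+2)) = 1 from rfl,
    show (⟨0, by omega⟩ : Fin (2+2)) = 0 from rfl,
    show (⟨1, by omega⟩ : Fin (2+2)) = 1 from rfl]
  generalize v 0 0 = a00
  generalize v 0 1 = a01
  generalize v 0 2 = a02
  generalize v 0 3 = a03
  generalize v 0 4 = a04
  generalize v 0 5 = a05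
  generalize v 0 6 = a06
  generalize v 1 0 = a10
  generalize v 1 1 = a11
  generalize v 1 2 = a12
  generalize v 1 3 = a13
  generalize v 1 4 = a14
  generalize v 1 5 = a15
  generalize v 1 6 = a16
  generalize v 2 0 = a20
  generalize v 2 1 = a21
  generalize v 2 2 = a22
  generalize v 2 3 = a23
  generalize v 2 4 = a24
  generalize v 2 5 = a25
  generalize v 2 6 = a26
  generalize v 3 0 = a30
  generalize v 3 1 = a31
  generalize v 3 2 = a32
  generalize v 3 3 = a33
  generalize v 3 4 = a34
  generalize v 3 5 = a35
  generalize v 3 6 = a36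
  ring1

end G2Solitons
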